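/- In Λ := C⟨x,y⟩/(xy+yx, x³-y²), for scalars λᵢ, the cube of A = λ₁y + λ₂x + λ₃y² + λ₄yx + λ₅x² + λ₆y²x + λ₇yx² + λ₈y²x² equals (λ₂³)y² + (λ₁²λ₂ + 3λ₂²λ₅)y²x + (λ₁λ₂²)yx² + 3(λ₁²λ₅ + λ₂²λ₃ + λ₂λ₅²)y²x². -/

import Mathlib

open FreeAlgebra

/-- The relations defining Λ = C⟨x,y⟩/(xy+yx, x³-y²), with x = ι ℂ 0 and y = ι ℂ 1. -/
inductive LamRel : FreeAlgebra ℂ (Fin 2) → FreeAlgebra ℂ (Fin 2) → Prop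
  | r1 : LamRel (ι ℂ 0 * ι ℂ 1 + ι ℂ 1 * ι ℂ 0) 0
  | r2 : LamRel ((ι ℂ 0) ^ 3 - (ι ℂ 1) ^ 2) 0

noncomputable abbrev Lam := RingQuot LamRel

noncomputable abbrev lx : Lam := RingQuot.mkAlgHom ℂ LamRel (ι ℂ 0)
noncomputable abbrev ly : Lam := RingQuot.mkAlgHom ℂ LamRel (ι ℂ 1)

/- Versions of standard sign lemmas stated with the `Neg` instance that gets
elaborated on `Lam` (the raw `RingQuot.instNeg`), so that `rw`/`simp` can match. -/
lemma myneg_mul (a b : Lam) : (-a) * b = -(a * b) := by exact @neg_mul Lam _ _ a b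
lemma mymul_neg (a b : Lam) : a * (-b) = -(a * b) := by exact @mul_neg Lam _ _ a b
lemma myneg_neg (a : Lam) : -(-a) = a := by exact @neg_neg Lam _ a
lemma mysmul_neg (c : ℂ) (a : Lam) : c • (-a) = -(c • a) := by
  exact smul_neg c a
lemma myneg_smul (c : ℂ) (a : Lam) : -(c • a) = (-c) • a := by
  exact (@neg_smul ℂ Lam _ _ _ c a).symm

lemma lam_key1 : lx * ly + ly * lx = 0 := by
  have h := RingQuot.mkAlgHom_rel ℂ LamRel.r1
  simpa [map_add, map_mul] using h

lemma lam_hxy : lx * ly = -(ly * lx) := by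
  exact eq_neg_of_add_eq_zero_left lam_key1

lemma lam_hxy' (z : Lam) : lx * (ly * z) = -(ly * (lx * z)) := by
  rw [← mul_assoc, lam_hxy, myneg_mul, mul_assoc]

lemma lam_hx3 : lx * (lx * lx) = ly * ly := by
  have h := RingQuot.mkAlgHom_rel ℂ LamRel.r2
  simp only [map_sub, map_pow, map_zero] at h
  have h2 : lx ^ 3 = ly ^ 2 := sub_eq_zero.mp h
  simpa [pow_succ, pow_zero, one_mul, mul_assoc] using h2

lemma lam_hx3' (z : Lam) : lx * (lx * (lx * z)) = ly * (ly * z) := by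
  rw [← mul_assoc lx lx z, ← mul_assoc, lam_hx3, mul_assoc]

lemma lam_hy3 : ly * (ly * ly) = 0 := by
  have h1 : ly * (ly * ly) = -(ly * (ly * ly)) := by
    conv_lhs => rw [← lam_hx3' ly]
    simp only [lam_hxy, lam_hxy', mymul_neg, myneg_neg, lam_hx3]
  have h3 : (2 : ℂ) • (ly * (ly * ly)) = 0 := by
    rw [two_smul]
    nth_rewrite 2 [h1]
    exact add_neg_cancel _
  rcases smul_eq_zero.mp h3 with h | h
  · norm_num at h
  · exact h

lemma lam_hy3' (z : Lam) : ly * (ly * (ly * z)) = 0 := by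
  rw [← mul_assoc ly ly z, ← mul_assoc, lam_hy3, zero_mul]

set_option maxHeartbeats 2000000 in
theorem stmt16 (l₁ l₂ l₃ l₄ l₅ l₆ l₇ l₈ : ℂ) :
    (l₁ • ly + l₂ • lx + l₃ • ly ^ 2 + l₄ • (ly * lx) + l₅ • lx ^ 2 +
      l₆ • (ly ^ 2 * lx) + l₇ • (ly * lx ^ 2) + l₈ • (ly ^ 2 * lx ^ 2)) ^ 3 =
    (l₂ ^ 3) • ly ^ 2 + (l₁ ^ 2 * l₂ + 3 * l₂ ^ 2 * l₅) • (ly ^ 2 * lx) +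
      (l₁ * l₂ ^ 2) • (ly * lx ^ 2) +
      (3 * (l₁ ^ 2 * l₅ + l₂ ^ 2 * l₃ + l₂ * l₅ ^ 2)) • (ly ^ 2 * lx ^ 2) := by
  simp only [pow_succ, pow_zero, one_mul]
  simp only [mul_add, add_mul, smul_mul_assoc, mul_smul_comm, smul_smul, mul_assoc]
  simp only [lam_hxy, lam_hxy', lam_hx3, lam_hx3', lam_hy3, lam_hy3', mymul_neg, myneg_mul,
    mysmul_neg, myneg_neg, myneg_smul, mul_zero, zero_mul, smul_zero, add_zero, zero_add]
  module
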